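/- Theorem 2 (Recursive existence of consistent dispersions). Suppose Assumptions 1 and 2 hold for the transition from the next step to the step after (i.e. with the boxes [e̲'_j, ē'_j] as current energy bounds, the boxes [e̲''_j, ē''_j] as subsequent energy bounds, and the power bounds q̲_j ≤ q̄_j). Let E, E' ∈ ℝ, let e ∈ D(E) be a consistent dispersion of E (for the current transition), and suppose Σ_j e̲'_j ≤ E' ≤ Σ_j ē'_j. Then there exists a vector e' ∈ ℝ^N with e̲'_j ≤ e'_j ≤ ē'_j for all j and Σ_j e'_j = E', which is a consistent dispersion of E' for the next transition; that is, max(Σ_j e̲''_j, E' + δ·Σ_j q̲_j) = Σ_j max(e̲''_j, e'_j + δ·q̲_j) and min(Σ_j ē''_j, E' + δ·Σ_j q̄_j) = Σ_j min(ē''_j, e'_j + δ·q̄_j). -/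
import Mathlib


open Finset

/-- If `a j ≤ b j` for all `j` and `∑ a ≤ E ≤ ∑ b`, then there is a vector in the
box `[a, b]` whose coordinates sum to `E`. -/
lemma exists_sum_between {N : ℕ} (a b : Fin N → ℝ) (hab : ∀ j, a j ≤ b j)
    (E : ℝ) (h1 : ∑ j, a j ≤ E) (h2 : E ≤ ∑ j, b j) :
    ∃ e : Fin N → ℝ, (∀ j, a j ≤ e j ∧ e j ≤ b j) ∧ ∑ j, e j = E := by
  set S := ∑ j, (b j - a j) with hS
  have hsub : ∑ j, b j - ∑ j, a j = S := by rw [hS, Finset.sum_sub_distrib]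
  have hS0 : 0 ≤ S := Finset.sum_nonneg (fun j _ => by linarith [hab j])
  rcases eq_or_lt_of_le hS0 with h0 | hpos
  · exact ⟨a, fun j => ⟨le_refl _, hab j⟩, by linarith⟩
  · set t := (E - ∑ j, a j) / S with ht
    have ht0 : 0 ≤ t := div_nonneg (by linarith) hS0
    have ht1 : t ≤ 1 := by rw [ht, div_le_one hpos]; linarith
    have htS : t * S = E - ∑ j, a j := div_mul_cancel₀ _ (ne_of_gt hpos)
    refine ⟨fun j => a j + t * (b j - a j), fun j => ⟨?_, ?_⟩, ?_⟩
    · show a j ≤ a j + t * (b j - a j)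
      nlinarith [mul_nonneg ht0 (sub_nonneg.2 (hab j))]
    · show a j + t * (b j - a j) ≤ b j
      nlinarith [mul_le_of_le_one_left (sub_nonneg.2 (hab j)) ht1]
    · rw [Finset.sum_add_distrib, ← Finset.mul_sum, ← hS]
      linarith

/-- Theorem 2 (Recursive existence of consistent dispersions): if Assumptions 1 and 2
hold for the next transition (current boxes `[elb', eub']`, next boxes `[elb'', eub'']`,
powers `[qlb, qub]`), `e` is a consistent dispersion of `E` for the current transition,
and `∑ elb' ≤ E' ≤ ∑ eub'`, then there exists a consistent dispersion `e'` of `E'`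
for the next transition. -/
theorem recursive_existence_of_consistent_dispersions
    (N : ℕ) (hN : 1 ≤ N) (δ : ℝ) (hδ : 0 < δ)
    (plb pub qlb qub elb eub elb' eub' elb'' eub'' : Fin N → ℝ)
    (hp : ∀ j, plb j ≤ pub j) (hq : ∀ j, qlb j ≤ qub j)
    (he : ∀ j, elb j ≤ eub j) (he' : ∀ j, elb' j ≤ eub' j)
    (he'' : ∀ j, elb'' j ≤ eub'' j)
    -- Assumption 1 for the next transition
    (hA1 : ∀ j, ∀ x : ℝ, elb' j ≤ x → x ≤ eub' j →
      max (elb'' j) (x + δ * qlb j) ≤ min (eub'' j) (x + δ * qub j))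
    -- Assumption 2(a) for the next transition
    (hA2a : ∀ j, ∃ x : ℝ, elb' j ≤ x ∧ x ≤ eub' j ∧
      elb'' j ≤ x + δ * qlb j ∧ x + δ * qub j ≤ eub'' j)
    -- Assumption 2(b) for the next transition
    (hA2b : ∀ j, elb' j + δ * qlb j ≤ elb'' j ∧ eub'' j ≤ eub' j + δ * qub j)
    (E E' : ℝ) (e : Fin N → ℝ)
    -- e ∈ D(E)
    (hmem : (∀ j, elb j ≤ e j ∧ e j ≤ eub j) ∧ ∑ j, e j = E)
    -- e is a consistent dispersion of E for the current transition
    (hcons : max (∑ j, elb' j) (E + δ * ∑ j, plb j)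
          = ∑ j, max (elb' j) (e j + δ * plb j) ∧
        min (∑ j, eub' j) (E + δ * ∑ j, pub j)
          = ∑ j, min (eub' j) (e j + δ * pub j))
    (hE' : ∑ j, elb' j ≤ E' ∧ E' ≤ ∑ j, eub' j) :
    ∃ e' : Fin N → ℝ,
      (∀ j, elb' j ≤ e' j ∧ e' j ≤ eub' j) ∧ (∑ j, e' j = E') ∧
      max (∑ j, elb'' j) (E' + δ * ∑ j, qlb j)
        = ∑ j, max (elb'' j) (e' j + δ * qlb j) ∧
      min (∑ j, eub'' j) (E' + δ * ∑ j, qub j)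
        = ∑ j, min (eub'' j) (e' j + δ * qub j) := by
  classical
  set L : Fin N → ℝ := fun j => elb'' j - δ * qlb j with hL
  set U : Fin N → ℝ := fun j => eub'' j - δ * qub j with hU
  have hLU : ∀ j, L j ≤ U j := by
    intro j
    obtain ⟨x, _, _, hx1, hx2⟩ := hA2a j
    simp only [hL, hU]; linarith
  have helbL : ∀ j, elb' j ≤ L j := by
    intro j; have := (hA2b j).1; simp only [hL]; linarith
  have hUeub : ∀ j, U j ≤ eub' j := by
    intro j; have := (hA2b j).2; simp only [hU]; linarith
  have hsumL : ∑ j, L j = ∑ j, elb'' j - δ * ∑ j, qlb j := by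
    simp only [hL]; rw [Finset.sum_sub_distrib, ← Finset.mul_sum]
  have hsumU : ∑ j, U j = ∑ j, eub'' j - δ * ∑ j, qub j := by
    simp only [hU]; rw [Finset.sum_sub_distrib, ← Finset.mul_sum]
  have hsumLU : ∑ j, L j ≤ ∑ j, U j :=
    Finset.sum_le_sum (fun j _ => hLU j)
  rcases le_or_gt E' (∑ j, L j) with hc1 | hc1
  · -- E' ≤ ∑ L : take e' in [elb', L]
    obtain ⟨e', hbox, hsum⟩ := exists_sum_between elb' L helbL E' hE'.1 hc1
    refine ⟨e', fun j => ⟨(hbox j).1, le_trans (hbox j).2 (le_trans (hLU j) (hUeub j))⟩,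
      hsum, ?_, ?_⟩
    · have h1 : E' + δ * ∑ j, qlb j ≤ ∑ j, elb'' j := by
        rw [hsumL] at hc1; linarith
      rw [max_eq_left h1]
      exact Finset.sum_congr rfl (fun j _ => (max_eq_left (by
        have h3 := (hbox j).2; simp only [hL] at h3; linarith)).symm)
    · have h2 : E' + δ * ∑ j, qub j ≤ ∑ j, eub'' j := by
        rw [hsumU] at hsumLU; linarith
      rw [min_eq_right h2]
      rw [Finset.sum_congr rfl (fun j (_ : j ∈ Finset.univ) =>
        (min_eq_right (by
          have h3 := le_trans (hbox j).2 (hLU j)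
          simp only [hU] at h3; linarith) :
          min (eub'' j) (e' j + δ * qub j) = e' j + δ * qub j))]
      rw [Finset.sum_add_distrib, hsum, ← Finset.mul_sum]
  · rcases le_or_gt E' (∑ j, U j) with hc2 | hc2
    · -- ∑ L ≤ E' ≤ ∑ U : take e' in [L, U]
      obtain ⟨e', hbox, hsum⟩ := exists_sum_between L U hLU E' (le_of_lt hc1) hc2
      refine ⟨e', fun j => ⟨le_trans (helbL j) (hbox j).1, le_trans (hbox j).2 (hUeub j)⟩,
        hsum, ?_, ?_⟩
      · have h1 : ∑ j, elb'' j ≤ E' + δ * ∑ j, qlb j := by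
          rw [hsumL] at hc1; linarith
        rw [max_eq_right h1]
        rw [Finset.sum_congr rfl (fun j (_ : j ∈ Finset.univ) =>
          (max_eq_right (by
            have h3 := (hbox j).1; simp only [hL] at h3; linarith) :
            max (elb'' j) (e' j + δ * qlb j) = e' j + δ * qlb j))]
        rw [Finset.sum_add_distrib, hsum, ← Finset.mul_sum]
      · have h2 : E' + δ * ∑ j, qub j ≤ ∑ j, eub'' j := by
          rw [hsumU] at hc2; linarith
        rw [min_eq_right h2]
        rw [Finset.sum_congr rfl (fun j (_ : j ∈ Finset.univ) =>
          (min_eq_right (by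
            have h3 := (hbox j).2; simp only [hU] at h3; linarith) :
            min (eub'' j) (e' j + δ * qub j) = e' j + δ * qub j))]
        rw [Finset.sum_add_distrib, hsum, ← Finset.mul_sum]
    · -- ∑ U ≤ E' : take e' in [U, eub']
      obtain ⟨e', hbox, hsum⟩ := exists_sum_between U eub' hUeub E' (le_of_lt hc2) hE'.2
      refine ⟨e', fun j => ⟨le_trans (helbL j) (le_trans (hLU j) (hbox j).1), (hbox j).2⟩,
        hsum, ?_, ?_⟩
      · have h1 : ∑ j, elb'' j ≤ E' + δ * ∑ j, qlb j := by
          rw [hsumL] at hc1; linarith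
        rw [max_eq_right h1]
        rw [Finset.sum_congr rfl (fun j (_ : j ∈ Finset.univ) =>
          (max_eq_right (by
            have h3 := le_trans (hLU j) (hbox j).1
            simp only [hL] at h3; linarith) :
            max (elb'' j) (e' j + δ * qlb j) = e' j + δ * qlb j))]
        rw [Finset.sum_add_distrib, hsum, ← Finset.mul_sum]
      · have h2 : ∑ j, eub'' j ≤ E' + δ * ∑ j, qub j := by
          rw [hsumU] at hc2; linarith
        rw [min_eq_left h2]
        exact Finset.sum_congr rfl (fun j _ => (min_eq_left (by
          have h3 := (hbox j).1; simp only [hU] at h3; linarith)).symm)
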